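/- arXiv:2202.09117 — 3 statements merged into one kernel-verified Lean document; each statement's English description precedes it below -/
import Mathlib

section
/- For every nonempty finite sequence (a_1, …, a_r) of integers with a_i ≥ 2 for all i, there exists a unique nonempty finite sequence (b_1, …, b_s) of integers with b_j ≥ 2 for all j such that 1/[a_1, …, a_r] + 1/[b_1, …, b_s] = 1. (The sequence (b_1, …, b_s) is called the dual string of (a_1, …, a_r); equivalently, if p/q = [a_1, …, a_r] for coprime p > q ≥ 1, then p/(p−q) = [b_1, …, b_s].) -/
/-- Hirzebruch–Jung continued fraction of a nonempty list of rationals: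
`hjCF [a] = a` and `hjCF (a :: rest) = a - 1 / hjCF rest`. -/
def hjCF : List ℚ → ℚ
  | [] => 0
  | [a] => a
  | a :: b :: t => a - 1 / hjCF (b :: t)

/-- Hirzebruch–Jung continued fraction of a list of integers. -/
def hjCFZ (l : List ℤ) : ℚ := hjCF (l.map (fun n => (n : ℚ)))

lemma hjCFZ_singleton (a : ℤ) : hjCFZ [a] = a := rfl

lemma hjCFZ_cons (a : ℤ) (m : List ℤ) (hm : m ≠ []) :
    hjCFZ (a :: m) = a - 1 / hjCFZ m := by
  obtain ⟨b, t, rfl⟩ := List.exists_cons_of_ne_nil hm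
  rfl

lemma hjCFZ_gt_one : ∀ l : List ℤ, l ≠ [] → (∀ a ∈ l, 2 ≤ a) → 1 < hjCFZ l := by
  intro l
  induction l with
  | nil => intro h; exact absurd rfl h
  | cons a t ih =>
    intro _ h2
    have ha : (2 : ℚ) ≤ (a : ℚ) := by exact_mod_cast h2 a (by simp)
    rcases eq_or_ne t [] with rfl | ht
    · rw [hjCFZ_singleton]; linarith
    · have htgt : 1 < hjCFZ t := ih ht (fun b hb => h2 b (by simp [hb]))
      rw [hjCFZ_cons a t ht]
      have h0 : 0 < 1 / hjCFZ t := by positivity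
      have h1 : 1 / hjCFZ t < 1 := by
        rw [div_lt_one (by linarith)]; linarith
      linarith

lemma hjCFZ_injective : ∀ l m : List ℤ, l ≠ [] → (∀ a ∈ l, 2 ≤ a) →
    m ≠ [] → (∀ a ∈ m, 2 ≤ a) → hjCFZ l = hjCFZ m → l = m := by
  intro l
  induction l with
  | nil => intro m h; exact absurd rfl h
  | cons a t ih =>
    intro m _ hl2 hmne hm2 heq
    obtain ⟨b, s, rfl⟩ := List.exists_cons_of_ne_nil hmne
    -- key : a = b
    have hbnd : ∀ (c : ℤ) (u : List ℤ), (∀ x ∈ c :: u, 2 ≤ x) →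
        (c : ℚ) - 1 < hjCFZ (c :: u) ∧ hjCFZ (c :: u) ≤ c := by
      intro c u hu
      rcases eq_or_ne u [] with rfl | hune
      · rw [hjCFZ_singleton]; constructor <;> simp
      · have := hjCFZ_gt_one u hune (fun x hx => hu x (by simp [hx]))
        rw [hjCFZ_cons c u hune]
        have h0 : 0 < 1 / hjCFZ u := by positivity
        have h1 : 1 / hjCFZ u < 1 := by rw [div_lt_one (by linarith)]; linarith
        constructor <;> linarith
    have hA := hbnd a t hl2
    have hB := hbnd b s hm2
    have hab : a = b := by
      by_contra hne
      rcases lt_or_gt_of_ne hne with h | h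
      · have : (a : ℚ) + 1 ≤ b := by exact_mod_cast Int.add_one_le_of_lt h
        rw [heq] at hA; linarith
      · have : (b : ℚ) + 1 ≤ a := by exact_mod_cast Int.add_one_le_of_lt h
        rw [heq] at hA; linarith
    subst hab
    rcases eq_or_ne t [] with rfl | htne
    · rcases eq_or_ne s [] with rfl | hsne
      · rfl
      · exfalso
        rw [hjCFZ_singleton, hjCFZ_cons a s hsne] at heq
        have hs1 := hjCFZ_gt_one s hsne (fun x hx => hm2 x (by simp [hx]))
        have h0 : 0 < 1 / hjCFZ s := by positivity
        linarith
    · rcases eq_or_ne s [] with rfl | hsne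
      · exfalso
        rw [hjCFZ_singleton, hjCFZ_cons a t htne] at heq
        have ht1 := hjCFZ_gt_one t htne (fun x hx => hl2 x (by simp [hx]))
        have h0 : 0 < 1 / hjCFZ t := by positivity
        linarith
      · have ht1 := hjCFZ_gt_one t htne (fun x hx => hl2 x (by simp [hx]))
        have hs1 := hjCFZ_gt_one s hsne (fun x hx => hm2 x (by simp [hx]))
        rw [hjCFZ_cons a t htne, hjCFZ_cons a s hsne] at heq
        have : (1 : ℚ) / hjCFZ t = 1 / hjCFZ s := by linarith
        have hts : hjCFZ t = hjCFZ s := by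
          field_simp at this
          exact this.symm
        have := ih s htne (fun x hx => hl2 x (by simp [hx])) hsne
          (fun x hx => hm2 x (by simp [hx])) hts
        rw [this]

lemma hjCFZ_surjective : ∀ n : ℕ, ∀ q : ℚ, q.den = n → 1 < q →
    ∃ l : List ℤ, l ≠ [] ∧ (∀ a ∈ l, 2 ≤ a) ∧ hjCFZ l = q := by
  intro n
  induction n using Nat.strong_induction_on with
  | _ n ih =>
    intro q hden hq
    rcases eq_or_ne q.den 1 with h1 | h1
    · -- q is an integer
      have hz : (q.num : ℚ) = q := by
        rw [← Rat.num_div_den q, h1]; simp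
      refine ⟨[q.num], by simp, ?_, ?_⟩
      · intro a ha
        simp at ha; subst ha
        have : (1 : ℚ) < q.num := by rw [hz]; exact hq
        exact_mod_cast this
      · rw [hjCFZ_singleton, hz]
    · -- q is not an integer
      set a : ℤ := ⌈q⌉ with ha
      have hqa : q < a := lt_of_le_of_ne (Int.le_ceil q) (by
        intro h
        apply h1
        rw [h]
        simp)
      have haq : (a : ℚ) - 1 < q := by
        have := Int.ceil_lt_add_one q
        linarith
      set r : ℚ := (a : ℚ) - q with hr
      have hr0 : 0 < r := by simp [hr]; linarith
      have hr1 : r < 1 := by simp [hr]; linarith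
      -- den of r divides q.den
      have hrden : r.den ∣ q.den := by
        have := Rat.add_den_dvd (a : ℚ) (-q)
        simpa [hr, sub_eq_add_neg, Rat.den_neg_eq_den] using this
      -- r.num < r.den
      have hrnum_pos : 0 < r.num := Rat.num_pos.mpr hr0
      have hrnumlt : r.num < (r.den : ℤ) := by
        have h := hr1
        rw [← Rat.num_div_den r, div_lt_one (by positivity)] at h
        exact_mod_cast h
      -- q' = r⁻¹
      set q' : ℚ := r⁻¹ with hq'
      have hq'1 : 1 < q' := by
        rw [hq', lt_inv_comm₀ one_pos hr0]; simpa using hr1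
      have hq'den : (q'.den : ℤ) ∣ r.num := by
        rw [hq', Rat.inv_def]
        exact Rat.den_dvd _ _
      have hq'denlt : q'.den < n := by
        have h1' : (q'.den : ℤ) ≤ r.num :=
          Int.le_of_dvd hrnum_pos hq'den
        have h2' : (r.den : ℤ) ≤ (q.den : ℤ) := by
          exact_mod_cast Nat.le_of_dvd q.pos hrden
        have : (q'.den : ℤ) < q.den := lt_of_le_of_lt h1' (lt_of_lt_of_le hrnumlt h2')
        rw [hden] at this
        exact_mod_cast this
      obtain ⟨m, hmne, hm2, hmval⟩ := ih q'.den hq'denlt q' rfl hq'1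
      refine ⟨a :: m, by simp, ?_, ?_⟩
      · intro x hx
        rcases List.mem_cons.mp hx with rfl | hx
        · have : (1 : ℚ) < (a : ℚ) := lt_trans hq hqa
          have h1a : 1 < a := by exact_mod_cast this
          omega
        · exact hm2 x hx
      · rw [hjCFZ_cons a m hmne, hmval, hq']
        rw [one_div, inv_inv, hr]
        ring

/-- Every nonempty string `(a_1, …, a_r)` of integers `≥ 2` has a unique dual string
`(b_1, …, b_s)` of integers `≥ 2`, characterized by
`1/[a_1, …, a_r] + 1/[b_1, …, b_s] = 1`. -/
theorem hjCF_dual_exists_unique (l : List ℤ) (hne : l ≠ []) (h2 : ∀ a ∈ l, 2 ≤ a) :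
    ∃! m : List ℤ, m ≠ [] ∧ (∀ b ∈ m, 2 ≤ b) ∧ 1 / hjCFZ l + 1 / hjCFZ m = 1 := by
  set x := hjCFZ l with hx
  have hx1 : 1 < x := hjCFZ_gt_one l hne h2
  have hx0 : x ≠ 0 := by linarith
  have hxm1 : x - 1 ≠ 0 := by intro h; apply hx0; linarith
  set y : ℚ := x / (x - 1) with hy
  have hy1 : 1 < y := by
    rw [hy, lt_div_iff₀ (by linarith)]; linarith
  obtain ⟨m, hmne, hm2, hmval⟩ := hjCFZ_surjective y.den y rfl hy1
  refine ⟨m, ⟨hmne, hm2, ?_⟩, ?_⟩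
  · rw [hmval, hy]
    field_simp
    ring
  · rintro m' ⟨hm'ne, hm'2, hm'eq⟩
    have hym' : 1 < hjCFZ m' := hjCFZ_gt_one m' hm'ne hm'2
    have hm'0 : hjCFZ m' ≠ 0 := by linarith
    have : hjCFZ m' = y := by
      rw [hy]
      field_simp at hm'eq ⊢
      linarith [mul_comm x (hjCFZ m'), hm'eq]
    exact hjCFZ_injective m' m hm'ne hm'2 hmne hm2 (this.trans hmval.symm)
end

section
/- Let M be any blowup matrix, i.e. a k×(k−1) matrix with entries in {0,1} obtained from the initial 2×1 matrix with rows (0), (1) by a finite sequence of exterior and interior matrix blowups. Let v_1, …, v_k denote the rows of M read from bottom to top (v_i is the (k+1−i)-th row of M). Then ⟨v_i, v_j⟩ = ⟨v_i, v_i⟩ − 1 for all 1 ≤ i < j ≤ k, i.e. the row-reversal of M is a CQS matrix. -/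
/-- Standard inner product of two integer vectors given as lists. -/
def innerL (v w : List ℤ) : ℤ := (List.zipWith (· * ·) v w).sum

/-- A matrix, given as its list of rows `v_1, …, v_r` (top to bottom), is a CQS matrix if
`r ≥ 2` and `⟨v_i, v_j⟩ = ⟨v_i, v_i⟩ - 1` for all `1 ≤ i < j ≤ r`. -/
def IsCQS (rows : List (List ℤ)) : Prop :=
  2 ≤ rows.length ∧
    ∀ i j : ℕ, i < j → j < rows.length →
      innerL (rows.getD i []) (rows.getD j []) = innerL (rows.getD i []) (rows.getD i []) - 1

/-- Append the entries of `col` to the corresponding rows, i.e. append a column. -/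
def rowAppendCol (rows : List (List ℤ)) (col : List ℤ) : List (List ℤ) :=
  List.zipWith (fun r c => r ++ [c]) rows col

/-- Exterior matrix blowup: keep `M` as the top-left block; the new last row is zero except
for a `1` in its last entry. -/
def exteriorMB (M : List (List ℤ)) : List (List ℤ) :=
  M.map (fun row => row ++ [0]) ++ [List.replicate (M.length - 1) 0 ++ [1]]

/-- Interior matrix blowup at the `i`-th term (`1 ≤ i ≤ r - 1`): insert immediately below the
`(i+1)`-st row a copy of the `(i+1)`-st row, then append a last column whose `j`-th entry is
`1` for `1 ≤ j ≤ i`, `0` for `j = i+1`, `1` for `j = i+2`, and `0` for `j > i+2`. -/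
def interiorMB (M : List (List ℤ)) (i : ℕ) : List (List ℤ) :=
  rowAppendCol (M.take (i + 1) ++ [M.getD i []] ++ M.drop (i + 1))
    (List.replicate i 1 ++ [0, 1] ++ List.replicate (M.length - i - 1) 0)

/-- Blowup matrices: obtained from the initial `2 × 1` matrix with rows `(0)`, `(1)` by a
finite sequence of exterior and interior matrix blowups. -/
inductive IsBlowupMatrix : List (List ℤ) → Prop
  | base : IsBlowupMatrix [[0], [1]]
  | exterior : ∀ M : List (List ℤ), IsBlowupMatrix M → IsBlowupMatrix (exteriorMB M)
  | interior : ∀ (M : List (List ℤ)) (i : ℕ), 1 ≤ i → i < M.length →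
      IsBlowupMatrix M → IsBlowupMatrix (interiorMB M i)

set_option linter.unreachableTactic false
set_option linter.unusedTactic false
set_option linter.unnecessarySeqFocus false

lemma innerL_append (a b : List ℤ) (x y : ℤ) (h : a.length = b.length) :
    innerL (a ++ [x]) (b ++ [y]) = innerL a b + x * y := by
  simp [innerL, List.zipWith_append h]

lemma innerL_replicate_zero (n : ℕ) (v : List ℤ) : innerL (List.replicate n 0) v = 0 := by
  induction n generalizing v with
  | zero => simp [innerL]
  | succ k ih =>
    cases v with
    | nil => simp [innerL]
    | cons a t => simpa [innerL, List.replicate_succ] using ih t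

/-- The invariant carried through the blowup induction. -/
def Good (M : List (List ℤ)) : Prop :=
  2 ≤ M.length ∧ (∀ j, j < M.length → (M.getD j []).length = M.length - 1) ∧
  ∀ p q, q < p → p < M.length →
    innerL (M.getD p []) (M.getD q []) = innerL (M.getD p []) (M.getD p []) - 1

lemma rows_len (M : List (List ℤ)) (i : ℕ) (hi : i < M.length) :
    (M.take (i + 1) ++ [M.getD i []] ++ M.drop (i + 1)).length = M.length + 1 := by
  simp; omega

lemma col_len (M : List (List ℤ)) (i : ℕ) (hi : i < M.length) :
    (List.replicate i (1:ℤ) ++ [0, 1] ++ List.replicate (M.length - i - 1) 0).length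
      = M.length + 1 := by
  simp; omega

lemma interiorMB_length (M : List (List ℤ)) (i : ℕ) (hi : i < M.length) :
    (interiorMB M i).length = M.length + 1 := by
  simp [interiorMB, rowAppendCol]; omega

lemma getD_rowAppendCol (rows : List (List ℤ)) (col : List ℤ) (j : ℕ)
    (h1 : j < rows.length) (h2 : j < col.length) :
    (rowAppendCol rows col).getD j [] = rows.getD j [] ++ [col.getD j 0] := by
  have hj : j < (rowAppendCol rows col).length := by
    simp [rowAppendCol]; omega
  rw [List.getD_eq_getElem _ _ hj, List.getD_eq_getElem _ _ h1, List.getD_eq_getElem _ _ h2]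
  simp [rowAppendCol]

lemma getD_rows (M : List (List ℤ)) (i : ℕ) (hi : i < M.length) (j : ℕ)
    (hj : j < M.length + 1) :
    (M.take (i + 1) ++ [M.getD i []] ++ M.drop (i + 1)).getD j []
      = M.getD (if j ≤ i then j else j - 1) [] := by
  have hlen := rows_len M i hi
  rw [List.getD_eq_getElem _ _ (by omega)]
  by_cases h : j ≤ i
  · rw [List.getElem_append_left (by simp <;> omega), List.getElem_append_left (by simp <;> omega),
      List.getElem_take]
    simp only [if_pos h]
    exact (List.getD_eq_getElem _ _ (by omega)).symm
  · by_cases h2 : j = i + 1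
    · subst h2
      rw [List.getElem_append_left (by simp <;> omega)]
      rw [List.getElem_append_right (by simp <;> omega)]
      simp [h]
    · rw [List.getElem_append_right (by simp <;> omega), List.getElem_drop]
      simp only [if_neg h]
      have hidx : i + 1 + (j - (List.take (i + 1) M ++ [M.getD i []]).length) = j - 1 := by
        simp <;> omega
      simp only [hidx]
      exact (List.getD_eq_getElem _ _ (by omega)).symm

lemma getD_col (M : List (List ℤ)) (i : ℕ) (j : ℕ) (hj : j < M.length + 1) (hi : i < M.length) :
    (List.replicate i (1:ℤ) ++ [0, 1] ++ List.replicate (M.length - i - 1) 0).getD j 0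
      = if j < i then 1 else if j = i then 0 else if j = i + 1 then 1 else 0 := by
  have hlen := col_len M i hi
  rw [List.getD_eq_getElem _ _ (by omega)]
  by_cases h : j < i
  · rw [List.getElem_append_left (by simp <;> omega), List.getElem_append_left (by simpa using h)]
    simp [h]
  · by_cases h1 : j = i
    · subst h1
      rw [List.getElem_append_left (by simp <;> omega), List.getElem_append_right (by simp)]
      simp [h]
    · by_cases h2 : j = i + 1
      · subst h2
        rw [List.getElem_append_left (by simp <;> omega), List.getElem_append_right (by simp)]
        simp [h, h1]
      · rw [List.getElem_append_right (by simp <;> omega)]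
        simp [h, h1, h2]

lemma good_blowup (M : List (List ℤ)) (hM : IsBlowupMatrix M) : Good M := by
  induction hM with
  | base =>
    refine ⟨by simp, ?_, ?_⟩
    · intro j hj
      simp only [List.length_cons, List.length_nil] at hj
      interval_cases j <;> simp
    · intro p q hqp hp
      simp only [List.length_cons, List.length_nil] at hp
      interval_cases p <;> interval_cases q <;> simp [innerL]
  | exterior M hM ih =>
    obtain ⟨h2, hlen, hip⟩ := ih
    have hN : (exteriorMB M).length = M.length + 1 := by simp [exteriorMB]
    have hget : ∀ j, j < M.length → (exteriorMB M).getD j [] = M.getD j [] ++ [0] := by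
      intro j hj
      rw [List.getD_eq_getElem _ _ (by simp [exteriorMB] <;> omega)]
      simp only [exteriorMB]
      rw [List.getElem_append_left (by simp <;> omega), List.getElem_map]
      rw [List.getD_eq_getElem _ _ hj]
    have hlast : (exteriorMB M).getD M.length []
        = List.replicate (M.length - 1) 0 ++ [1] := by
      rw [List.getD_eq_getElem _ _ (by simp [exteriorMB])]
      simp only [exteriorMB]
      rw [List.getElem_append_right (by simp)]
      simp
    refine ⟨by omega, ?_, ?_⟩
    · intro j hj
      rw [hN] at hj
      rcases Nat.lt_or_ge j M.length with h | h
      · rw [hget j h, hN, List.length_append, hlen j h, List.length_singleton]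
        omega
      · have hj' : j = M.length := by omega
        subst hj'
        rw [hlast, hN, List.length_append, List.length_replicate, List.length_singleton]
        omega
    · intro p q hqp hp
      rw [hN] at hp
      rcases Nat.lt_or_ge p M.length with h | h
      · rw [hget p h, hget q (by omega)]
        rw [innerL_append _ _ _ _ (by rw [hlen p h, hlen q (by omega)]),
            innerL_append _ _ _ _ (by rw [hlen p h])]
        rw [hip p q hqp h]; ring
      · have hpM : p = M.length := by omega
        subst hpM
        rw [hlast, hget q (by omega)]
        rw [innerL_append _ _ _ _ (by rw [List.length_replicate, hlen q (by omega)]),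
            innerL_append _ _ _ _ (by simp)]
        rw [innerL_replicate_zero, innerL_replicate_zero]
        norm_num
  | interior M i hi1 hi2 hM ih =>
    obtain ⟨h2, hlen, hip⟩ := ih
    have hNlen : (interiorMB M i).length = M.length + 1 := interiorMB_length M i hi2
    have hget : ∀ j, j < M.length + 1 →
        (interiorMB M i).getD j [] =
          M.getD (if j ≤ i then j else j - 1) [] ++
            [if j < i then (1:ℤ) else if j = i then 0 else if j = i + 1 then 1 else 0] := by
      intro j hj
      rw [interiorMB, getD_rowAppendCol _ _ j (by rw [rows_len M i hi2]; omega)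
            (by rw [col_len M i hi2]; omega),
          getD_rows M i hi2 j hj, getD_col M i j hj hi2]
    have hflt : ∀ j, j < M.length + 1 → (if j ≤ i then j else j - 1) < M.length := by
      intro j hj; split <;> omega
    refine ⟨by omega, ?_, ?_⟩
    · intro j hj
      rw [hNlen] at hj
      rw [hget j hj, hNlen, List.length_append, hlen _ (hflt j hj), List.length_singleton]
      omega
    · intro p q hqp hp
      rw [hNlen] at hp
      rw [hget p hp, hget q (by omega)]
      rw [innerL_append _ _ _ _ (by rw [hlen _ (hflt p hp), hlen _ (hflt q (by omega))]),
          innerL_append _ _ _ _ rfl]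
      by_cases hcase : p = i + 1 ∧ q = i
      · obtain ⟨hp1, hq1⟩ := hcase
        have e1 : (if p ≤ i then p else p - 1) = i := by split_ifs <;> omega
        have e2 : (if q ≤ i then q else q - 1) = i := by split_ifs <;> omega
        have c1 : (if p < i then (1:ℤ) else if p = i then 0
            else if p = i + 1 then 1 else 0) = 1 := by split_ifs <;> omega
        have c2 : (if q < i then (1:ℤ) else if q = i then 0
            else if q = i + 1 then 1 else 0) = 0 := by split_ifs <;> omega
        rw [e1, e2, c1, c2]
        ring
      · have hne : p ≠ i + 1 ∨ q ≠ i := by tauto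
        have hfp : (if q ≤ i then q else q - 1) < (if p ≤ i then p else p - 1) := by
          rcases hne with h | h <;> split_ifs <;> omega
        rw [hip _ _ hfp (hflt p hp)]
        have hc : (if p < i then (1:ℤ) else if p = i then 0 else if p = i + 1 then 1 else 0) *
              (if q < i then (1:ℤ) else if q = i then 0 else if q = i + 1 then 1 else 0) =
            (if p < i then (1:ℤ) else if p = i then 0 else if p = i + 1 then 1 else 0) *
              (if p < i then (1:ℤ) else if p = i then 0 else if p = i + 1 then 1 else 0) := by
          rcases hne with h | h <;> split_ifs <;> omega
        rw [hc]
        ring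

/-- For any blowup matrix `M`, the rows of `M` read from bottom to top satisfy
`⟨v_i, v_j⟩ = ⟨v_i, v_i⟩ - 1` for all `i < j`, i.e. the row-reversal of `M` is a
CQS matrix. -/
theorem blowupMatrix_reverse_isCQS (M : List (List ℤ)) (hM : IsBlowupMatrix M) :
    IsCQS M.reverse := by
  obtain ⟨h2, hlen, hip⟩ := good_blowup M hM
  refine ⟨by simpa using h2, ?_⟩
  intro a b hab hb
  simp only [List.length_reverse] at hb
  have ha : a < M.length := by omega
  have e : ∀ k, k < M.length → M.reverse.getD k [] = M.getD (M.length - 1 - k) [] := by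
    intro k hk
    rw [List.getD_eq_getElem _ _ (by simpa using hk), List.getElem_reverse,
        List.getD_eq_getElem _ _ (by omega)]
  rw [e a ha, e b hb]
  exact hip _ _ (by omega) (by omega)
end

section
/- Let M be an r×c matrix with entries in {0,1} (r ≥ 2) whose rows w_1, …, w_r (read from top to bottom) satisfy ⟨w_i, w_j⟩ = ⟨w_i, w_i⟩ − 1 for all 1 ≤ j < i ≤ r (i.e. the row-reversal of M is a CQS matrix). Then for any 1 ≤ s ≤ r, the r×(c+1) matrix obtained from M by appending a column whose first s entries (from the top) are 1 and whose remaining entries are 0 again has the property that its row-reversal is a CQS matrix. -/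
lemma innerL_append_single (v w : List ℤ) (h : v.length = w.length) (a b : ℤ) :
    innerL (v ++ [a]) (w ++ [b]) = innerL v w + a * b := by
  unfold innerL
  rw [List.zipWith_append h]
  simp

/-- Let `M` be an `r × c` matrix with entries in `{0,1}` (`r ≥ 2`) whose row-reversal is a
CQS matrix. Then for any `1 ≤ s ≤ r`, appending to `M` the column whose first `s` entries
(from the top) are `1` and whose remaining entries are `0` again yields a matrix whose
row-reversal is a CQS matrix. -/
theorem appendCol_reverse_isCQS (M : List (List ℤ)) (c : ℕ) (hr : 2 ≤ M.length)
    (hlen : ∀ row ∈ M, row.length = c)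
    (h01 : ∀ row ∈ M, ∀ x ∈ row, x = 0 ∨ x = 1)
    (hcqs : IsCQS M.reverse)
    (s : ℕ) (hs1 : 1 ≤ s) (hs2 : s ≤ M.length) :
    IsCQS (rowAppendCol M (List.replicate s 1 ++ List.replicate (M.length - s) 0)).reverse := by
  obtain ⟨-, hIJ⟩ := hcqs
  set r := M.length with hrdef
  set col : List ℤ := List.replicate s 1 ++ List.replicate (r - s) 0 with hcoldef
  have hcol : col.length = r := by simp [hcoldef]; omega
  have hA : (rowAppendCol M col).length = r := by
    simp [rowAppendCol, hcol]; omega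
  have colget : ∀ k, (hk : k < r) → col[k]'(by omega) = if k < s then 1 else 0 := by
    intro k hk
    rcases lt_or_ge k s with h | h
    · rw [List.getElem_append_left (by simpa using h)]
      simp [h]
    · rw [List.getElem_append_right (by simpa using h)]
      simp; omega
  have key : ∀ t, t < r →
      (rowAppendCol M col).reverse.getD t [] =
        M[r - 1 - t]'(by omega) ++ [if r - 1 - t < s then (1:ℤ) else 0] := by
    intro t ht
    rw [List.getD_eq_getElem _ _ (by simpa [hA] using ht)]
    rw [List.getElem_reverse]
    simp only [hA]
    rw [show (rowAppendCol M col)[r - 1 - t]'(by omega) =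
        (fun row cc => row ++ [cc]) (M[r-1-t]'(by omega)) (col[r-1-t]'(by omega)) from
      List.getElem_zipWith ..]
    rw [colget _ (by omega)]
  constructor
  · rw [List.length_reverse, hA]; exact hr
  intro i j hij hjr
  rw [List.length_reverse, hA] at hjr
  have hir : i < r := lt_trans hij hjr
  rw [key i hir, key j (by omega)]
  have hlen' : (M[r-1-i]'(by omega)).length = (M[r-1-j]'(by omega)).length := by
    rw [hlen _ (List.getElem_mem _), hlen _ (List.getElem_mem _)]
  rw [innerL_append_single _ _ hlen', innerL_append_single _ _ rfl]
  have hold := hIJ i j hij (by simpa using hjr)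
  rw [List.getD_eq_getElem _ _ (by simpa using hir),
      List.getD_eq_getElem _ _ (by simpa using hjr)] at hold
  rw [List.getElem_reverse, List.getElem_reverse] at hold
  simp only [← hrdef] at hold
  rw [hold]
  have hif : (if r-1-i < s then (1:ℤ) else 0) * (if r-1-j < s then 1 else 0)
      = (if r-1-i < s then (1:ℤ) else 0) * (if r-1-i < s then 1 else 0) := by
    by_cases h1 : r - 1 - i < s
    · have h2 : r - 1 - j < s := by omega
      simp [h1, h2]
    · simp [h1]
  rw [hif]; ring
end
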